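/- Let i < k be positive integers. If 0 ≤ α ≤ 1, then (i/k)^α ≥ (Γ(i+α)/Γ(i)) / (Γ(k+α)/Γ(k)) ≥ ((i + (α-1)/2)/(k + (α-1)/2))^α. -/

import Mathlib

open Real Set

private lemma f_aux_convex : ConvexOn ℝ (Set.Ico (0:ℝ) 1)
    (fun t => Real.log (1 + t) - Real.log (1 - t)) := by
  have hint : interior (Set.Ico (0:ℝ) 1) = Set.Ioo 0 1 := interior_Ico
  refine convexOn_of_hasDerivWithinAt2_nonneg (f' := fun t => (1+t)⁻¹ + (1-t)⁻¹)
      (f'' := fun t => -(1/(1+t)^2) + 1/(1-t)^2) (convex_Ico 0 1) ?_ ?_ ?_ ?_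
  · intro t ht
    have h1 : (1:ℝ) + t ≠ 0 := by simp only [mem_Ico] at ht; nlinarith [ht.1, ht.2]
    have h2 : (1:ℝ) - t ≠ 0 := by simp only [mem_Ico] at ht; nlinarith [ht.1, ht.2]
    exact (((Real.continuousAt_log h1).comp (by fun_prop)).sub
      ((Real.continuousAt_log h2).comp (by fun_prop))).continuousWithinAt
  · intro t ht
    rw [hint] at ht
    obtain ⟨ht0, ht1⟩ := ht
    have h1 : (0:ℝ) < 1 + t := by linarith
    have h2 : (0:ℝ) < 1 - t := by linarith
    have d1 : HasDerivAt (fun t : ℝ => Real.log (1 + t)) ((1+t)⁻¹) t := by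
      have := (Real.hasDerivAt_log h1.ne').comp t ((hasDerivAt_id t).const_add 1)
      simpa [Function.comp_def] using this
    have d2 : HasDerivAt (fun t : ℝ => Real.log (1 - t)) (-(1-t)⁻¹) t := by
      have := (Real.hasDerivAt_log h2.ne').comp t ((hasDerivAt_id t).const_sub 1)
      simpa [Function.comp_def] using this
    have := (d1.sub d2)
    have h : HasDerivAt (fun t : ℝ => Real.log (1 + t) - Real.log (1 - t))
        ((1+t)⁻¹ + (1-t)⁻¹) t := by exact this.congr_deriv (by ring)
    exact h.hasDerivWithinAt
  · intro t ht
    rw [hint] at ht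
    obtain ⟨ht0, ht1⟩ := ht
    have h1 : (0:ℝ) < 1 + t := by linarith
    have h2 : (0:ℝ) < 1 - t := by linarith
    have d1 : HasDerivAt (fun t : ℝ => (1+t)⁻¹) (-(1/(1+t)^2)) t := by
      have h := (((hasDerivAt_id t).const_add 1).inv h1.ne')
      exact h.congr_deriv (by simp only [id_eq]; ring)
    have d2 : HasDerivAt (fun t : ℝ => (1-t)⁻¹) (1/(1-t)^2) t := by
      have h := (((hasDerivAt_id t).const_sub 1).inv h2.ne')
      exact h.congr_deriv (by simp only [id_eq]; ring)
    exact (d1.add d2).hasDerivWithinAt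
  · intro t ht
    rw [hint] at ht
    obtain ⟨ht0, ht1⟩ := ht
    have h1 : (0:ℝ) < 1 + t := by linarith
    have h2 : (0:ℝ) < 1 - t := by linarith
    have : (1-t)^2 ≤ (1+t)^2 := by nlinarith
    have e1 : (0:ℝ) < (1+t)^2 := by positivity
    have e2 : (0:ℝ) < (1-t)^2 := by positivity
    have := one_div_le_one_div_of_le e2 this
    linarith

/-- key log inequality for the lower bound -/
private lemma key_log (α x : ℝ) (hα0 : 0 < α) (hα1 : α ≤ 1) (hx : 1 ≤ x) :
    Real.log (x + α) - Real.log x ≤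
      α * (Real.log (x + (α+1)/2) - Real.log (x + (α-1)/2)) := by
  set m : ℝ := x + α/2 with hm_def
  have hm : 1 ≤ m := by simp only [hm_def]; linarith
  have hm0 : (0:ℝ) < m := by linarith
  set w : ℝ := 1/(2*m) with hw_def
  have hw0 : 0 < w := by positivity
  have hw1 : w < 1 := by
    rw [hw_def, div_lt_one (by linarith)]; linarith
  have hconv := f_aux_convex.2 (x := 0) (y := w)
      (by constructor <;> norm_num)
      (⟨hw0.le, hw1⟩)
      (by linarith : (0:ℝ) ≤ 1 - α) hα0.le (by ring)
  simp only [smul_eq_mul, mul_zero, zero_add, add_zero, sub_zero, Real.log_one] at hconv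
  -- hconv : log (1 + α*w) - log (1 - α*w) ≤ (1-α)*0 + α*(log (1+w) - log (1-w))
  have hx0 : (0:ℝ) < x := by linarith
  have hxα : (0:ℝ) < x + α := by linarith
  have hp1 : (0:ℝ) < x + (α+1)/2 := by linarith
  have hp2 : (0:ℝ) < x + (α-1)/2 := by linarith
  have e1 : 1 + α*w = (x+α)/m := by
    rw [hw_def]; field_simp; ring
  have e2 : 1 - α*w = x/m := by
    rw [hw_def]; field_simp; ring
  have e3 : 1 + w = (x + (α+1)/2)/m := by
    rw [hw_def]; field_simp; ring
  have e4 : 1 - w = (x + (α-1)/2)/m := by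
    rw [hw_def]; field_simp; ring
  rw [e1, e2, e3, e4, Real.log_div hxα.ne' hm0.ne', Real.log_div hx0.ne' hm0.ne',
    Real.log_div hp1.ne' hm0.ne', Real.log_div hp2.ne' hm0.ne'] at hconv
  have h := hconv
  linarith [h]

/-- stepwise lower bound -/
private lemma stepB (α x : ℝ) (hα0 : 0 ≤ α) (hα1 : α ≤ 1) (hx : 1 ≤ x) :
    ((x + (α-1)/2) / (x + 1 + (α-1)/2)) ^ α ≤ x / (x + α) := by
  rcases eq_or_lt_of_le hα0 with h0 | h0
  · rw [← h0, Real.rpow_zero, add_zero, div_self (by linarith : x ≠ 0)]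
  have hx0 : (0:ℝ) < x := by linarith
  have hxα : (0:ℝ) < x + α := by linarith
  have hp1 : (0:ℝ) < x + (α-1)/2 := by linarith
  have hp2 : (0:ℝ) < x + 1 + (α-1)/2 := by linarith
  have hbase : (0:ℝ) < (x + (α-1)/2) / (x + 1 + (α-1)/2) := by positivity
  have hrhs : (0:ℝ) < x / (x + α) := by positivity
  rw [← Real.log_le_log_iff (Real.rpow_pos_of_pos hbase α) hrhs,
    Real.log_rpow hbase, Real.log_div hp1.ne' hp2.ne', Real.log_div hx0.ne' hxα.ne']
  have := key_log α x h0 hα1 hx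
  have heq : x + 1 + (α-1)/2 = x + (α+1)/2 := by ring
  rw [heq]
  nlinarith [this]

/-- stepwise upper bound -/
private lemma stepA (α x : ℝ) (hα0 : 0 ≤ α) (hα1 : α ≤ 1) (hx : 1 ≤ x) :
    x / (x + α) ≤ (x / (x+1)) ^ α := by
  have hx0 : (0:ℝ) < x := by linarith
  have hxα : (0:ℝ) < x + α := by linarith
  have hx1 : (0:ℝ) < x + 1 := by linarith
  have hbase : (0:ℝ) < x/(x+1) := by positivity
  have hlhs : (0:ℝ) < x/(x+α) := by positivity
  rw [← Real.log_le_log_iff hlhs (Real.rpow_pos_of_pos hbase α),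
    Real.log_rpow hbase, Real.log_div hx0.ne' hxα.ne', Real.log_div hx0.ne' hx1.ne']
  -- need : log x - log (x+α) ≤ α * (log x - log (x+1))
  have hconc := (strictConcaveOn_log_Ioi.concaveOn).2 (x := x) (y := x+1)
      (mem_Ioi.mpr hx0) (mem_Ioi.mpr hx1)
      (by linarith : (0:ℝ) ≤ 1 - α) hα0 (by ring)
  simp only [smul_eq_mul] at hconc
  have heq : (1-α)*x + α*(x+1) = x + α := by ring
  rw [heq] at hconc
  nlinarith [hconc]

theorem gamma_ratio_two_sided_reversed (α : ℝ) (hα0 : 0 ≤ α) (hα1 : α ≤ 1)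
    (i k : ℕ) (hi : 0 < i) (hik : i < k) :
    ((i + (α - 1) / 2) / (k + (α - 1) / 2)) ^ α ≤
        (Real.Gamma (i + α) / Real.Gamma i) / (Real.Gamma (k + α) / Real.Gamma k) ∧
    (Real.Gamma (i + α) / Real.Gamma i) / (Real.Gamma (k + α) / Real.Gamma k) ≤
        ((i : ℝ) / k) ^ α := by
  have hi1 : (1:ℝ) ≤ (i:ℝ) := by exact_mod_cast hi
  have hi0 : (0:ℝ) < (i:ℝ) := by linarith
  have hiα : (0:ℝ) < (i:ℝ) + α := by linarith
  have hic : (0:ℝ) < (i:ℝ) + (α-1)/2 := by linarith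
  have hGi : 0 < Real.Gamma i := Real.Gamma_pos_of_pos hi0
  have hGiα : 0 < Real.Gamma ((i:ℝ) + α) := Real.Gamma_pos_of_pos hiα
  induction k, hik using Nat.le_induction with
  | base =>
    have hGrec : Real.Gamma ((i:ℝ) + 1 + α) = ((i:ℝ) + α) * Real.Gamma ((i:ℝ) + α) := by
      rw [show (i:ℝ) + 1 + α = ((i:ℝ) + α) + 1 by ring, Real.Gamma_add_one hiα.ne']
    have hGrec2 : Real.Gamma ((i:ℝ) + 1) = (i:ℝ) * Real.Gamma i := by
      rw [Real.Gamma_add_one hi0.ne']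
    have hcast : ((i+1 : ℕ) : ℝ) = (i:ℝ) + 1 := by push_cast; ring
    rw [hcast, hGrec, hGrec2]
    have hR : (Real.Gamma ((i:ℝ) + α) / Real.Gamma i) /
        ((((i:ℝ) + α) * Real.Gamma ((i:ℝ) + α)) / ((i:ℝ) * Real.Gamma i)) =
        (i:ℝ) / ((i:ℝ) + α) := by
      field_simp
    rw [hR]
    constructor
    · exact stepB α i hα0 hα1 hi1
    · exact stepA α i hα0 hα1 hi1
  | succ k hk ih =>
    have hk1 : (1:ℝ) ≤ (k:ℝ) := by
      have : 1 ≤ k := le_trans hi (Nat.le_of_succ_le hk)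
      exact_mod_cast this
    have hk0 : (0:ℝ) < (k:ℝ) := by linarith
    have hkα : (0:ℝ) < (k:ℝ) + α := by linarith
    have hkc : (0:ℝ) < (k:ℝ) + (α-1)/2 := by linarith
    have hkc1 : (0:ℝ) < (k:ℝ) + 1 + (α-1)/2 := by linarith
    have hGk : 0 < Real.Gamma k := Real.Gamma_pos_of_pos hk0
    have hGkα : 0 < Real.Gamma ((k:ℝ) + α) := Real.Gamma_pos_of_pos hkα
    obtain ⟨ihl, ihu⟩ := ih
    have hGrec : Real.Gamma ((k:ℝ) + 1 + α) = ((k:ℝ) + α) * Real.Gamma ((k:ℝ) + α) := by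
      rw [show (k:ℝ) + 1 + α = ((k:ℝ) + α) + 1 by ring, Real.Gamma_add_one hkα.ne']
    have hGrec2 : Real.Gamma ((k:ℝ) + 1) = (k:ℝ) * Real.Gamma k := by
      rw [Real.Gamma_add_one hk0.ne']
    have hcast : ((k+1 : ℕ) : ℝ) = (k:ℝ) + 1 := by push_cast; ring
    rw [hcast, hGrec, hGrec2]
    have hR : (Real.Gamma ((i:ℝ) + α) / Real.Gamma i) /
        ((((k:ℝ) + α) * Real.Gamma ((k:ℝ) + α)) / ((k:ℝ) * Real.Gamma k)) =
        ((Real.Gamma ((i:ℝ) + α) / Real.Gamma i) /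
          (Real.Gamma ((k:ℝ) + α) / Real.Gamma k)) * ((k:ℝ) / ((k:ℝ) + α)) := by
      field_simp
    rw [hR]
    have hRnonneg : 0 ≤ (Real.Gamma ((i:ℝ) + α) / Real.Gamma i) /
        (Real.Gamma ((k:ℝ) + α) / Real.Gamma k) := by positivity
    constructor
    · -- lower bound
      have hsplit : ((i:ℝ) + (α-1)/2) / (((k:ℝ)+1) + (α-1)/2) =
          (((i:ℝ) + (α-1)/2) / ((k:ℝ) + (α-1)/2)) *
          (((k:ℝ) + (α-1)/2) / ((k:ℝ) + 1 + (α-1)/2)) := by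
        rw [div_mul_div_comm, mul_comm ((i:ℝ) + (α-1)/2), mul_div_mul_left _ _ hkc.ne']
      rw [hsplit, Real.mul_rpow (by positivity) (by positivity)]
      have hB := stepB α k hα0 hα1 hk1
      exact mul_le_mul ihl hB (Real.rpow_nonneg (by positivity) α) hRnonneg
    · -- upper bound
      have hsplit : ((i:ℝ) / ((k:ℝ)+1)) =
          ((i:ℝ) / (k:ℝ)) * ((k:ℝ) / ((k:ℝ)+1)) := by
        field_simp
      rw [hsplit, Real.mul_rpow (by positivity) (by positivity)]
      have hA := stepA α k hα0 hα1 hk1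
      have hd : 0 ≤ (k:ℝ)/((k:ℝ)+α) := by positivity
      exact mul_le_mul ihu hA hd (Real.rpow_nonneg (by positivity) α)
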